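/- Let E be a finite-dimensional real inner product space, let g : E → ℝ be twice differentiable at x̄ with Hessian H := ∇²g(x̄) (a self-adjoint linear map) satisfying ⟨H d, d⟩ ≥ ξ‖d‖² for all d ∈ E and some ξ ∈ ℝ, let h : E → ℝ be differentiable at x̄, and set φ := g − h and w := ∇φ(x̄) = ∇g(x̄) − ∇h(x̄). Assume w ≠ 0, let ζ > 0 and ρ ≥ ζ − ξ. Then: (1) there exists a nonzero d ∈ E with H d + ρ d = −w; (2) every d satisfying H d + ρ d = −w satisfies ⟨w, d⟩ ≤ −ζ‖d‖² (in particular d ≠ 0); and (3) for every such d and every σ ∈ (0,1) there exists η > 0 such that φ(x̄ + τ d) < φ(x̄) + σ τ ⟨w, d⟩ ≤ φ(x̄) − σ ζ τ ‖d‖² for all τ ∈ (0, η). -/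

import Mathlib

open scoped RealInnerProductSpace

/-- Smooth instance of Lemma 3.2: existence of descent directions for the regularized
coderivative-based Newton step, and the descent estimates they satisfy. -/
theorem rcsn_direction_exists_and_descent
    {E : Type*} [NormedAddCommGroup E] [InnerProductSpace ℝ E] [FiniteDimensional ℝ E]
    (g h : E → ℝ) (xb : E)
    (hgd : DifferentiableAt ℝ g xb) (hhd : DifferentiableAt ℝ h xb)
    (H : E →L[ℝ] E) (hH : HasFDerivAt (gradient g) H xb)
    (hsa : ∀ u v : E, ⟪H u, v⟫ = ⟪u, H v⟫)
    (ξ : ℝ) (hlow : ∀ u : E, ξ * ‖u‖ ^ 2 ≤ ⟪H u, u⟫)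
    (φ : E → ℝ) (hφ : ∀ y, φ y = g y - h y)
    (w : E) (hw : w = gradient g xb - gradient h xb) (hw0 : w ≠ 0)
    (ζ ρ : ℝ) (hζ : 0 < ζ) (hρ : ζ - ξ ≤ ρ) :
    (∃ d : E, d ≠ 0 ∧ H d + ρ • d = -w) ∧
    (∀ d : E, H d + ρ • d = -w → d ≠ 0 ∧ ⟪w, d⟫ ≤ -ζ * ‖d‖ ^ 2) ∧
    (∀ d : E, H d + ρ • d = -w → ∀ σ : ℝ, σ ∈ Set.Ioo (0 : ℝ) 1 →
      ∃ η > (0 : ℝ), ∀ τ : ℝ, τ ∈ Set.Ioo 0 η →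
        φ (xb + τ • d) < φ xb + σ * τ * ⟪w, d⟫ ∧
        φ xb + σ * τ * ⟪w, d⟫ ≤ φ xb - σ * ζ * τ * ‖d‖ ^ 2) := by
  -- key coercivity of T := H + ρ • id
  have hkey : ∀ u : E, ζ * ‖u‖ ^ 2 ≤ ⟪H u + ρ • u, u⟫ := by
    intro u
    rw [inner_add_left, real_inner_smul_left, real_inner_self_eq_norm_sq]
    nlinarith [hlow u, sq_nonneg ‖u‖]
  -- part 2 core
  have part2 : ∀ d : E, H d + ρ • d = -w → d ≠ 0 ∧ ⟪w, d⟫ ≤ -ζ * ‖d‖ ^ 2 := by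
    intro d hd
    have hwd : ⟪w, d⟫ ≤ -ζ * ‖d‖ ^ 2 := by
      have := hkey d
      rw [hd, inner_neg_left] at this
      linarith
    refine ⟨?_, hwd⟩
    rintro rfl
    have h0 : (0:E) = -w := by simpa using hd
    exact hw0 (neg_eq_zero.mp h0.symm)
  -- part 1: T is bijective
  have hinj : Function.Injective (fun u => H u + ρ • u) := by
    intro u v huv
    have huv' : H u + ρ • u = H v + ρ • v := huv
    have h0 : H (u - v) + ρ • (u - v) = 0 := by
      simp only [map_sub, smul_sub]
      rw [sub_add_sub_comm, huv', sub_self]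
    have := hkey (u - v)
    rw [h0, inner_zero_left] at this
    have : ‖u - v‖ ^ 2 ≤ 0 := by nlinarith
    have : u - v = 0 := by
      have := pow_eq_zero_iff (n := 2) (by norm_num) |>.mp (le_antisymm this (by positivity))
      simpa using this
    exact sub_eq_zero.mp this
  let T : E →ₗ[ℝ] E := (H : E →ₗ[ℝ] E) + ρ • (LinearMap.id : E →ₗ[ℝ] E)
  have hlin : Function.Injective T := by
    intro u v huv
    exact hinj (by simpa [T] using huv)
  have hsurj : Function.Surjective T :=
    (LinearMap.injective_iff_surjective).mp hlin
  obtain ⟨d0, hd0⟩ := hsurj (-w)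
  simp only [T, LinearMap.add_apply, LinearMap.smul_apply, LinearMap.id_apply,
    ContinuousLinearMap.coe_coe] at hd0
  have hd0' : H d0 + ρ • d0 = -w := by simpa using hd0
  refine ⟨⟨d0, (part2 d0 hd0').1, hd0'⟩, part2, ?_⟩
  -- part 3
  intro d hd σ hσ
  obtain ⟨hdne, hwd⟩ := part2 d hd
  have hdnorm : 0 < ‖d‖ ^ 2 := pow_pos (norm_pos_iff.mpr hdne) 2
  have hc : ⟪w, d⟫ < 0 := lt_of_le_of_lt hwd (by nlinarith)
  -- φ has gradient w at xb
  have hφg : HasGradientAt φ w xb := by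
    have hg := hgd.hasGradientAt
    have hh := hhd.hasGradientAt
    have : HasFDerivAt φ (InnerProductSpace.toDual ℝ E (gradient g xb) -
        InnerProductSpace.toDual ℝ E (gradient h xb)) xb := by
      have := hg.hasFDerivAt.sub hh.hasFDerivAt
      exact this.congr_of_eventuallyEq (by filter_upwards with y; rw [hφ]; rfl)
    rw [hw]
    have := this.hasGradientAt
    simpa [gradient] using this
  -- derivative of τ ↦ φ (xb + τ • d) at 0 is ⟪w, d⟫
  have hcurve : HasDerivAt (fun τ : ℝ => xb + τ • d) d 0 := by
    simpa using (hasDerivAt_id (0:ℝ)).smul_const d |>.const_add xb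
  have hcomp : HasDerivAt (fun τ : ℝ => φ (xb + τ • d)) ⟪w, d⟫ 0 := by
    have hF : HasFDerivAt φ (InnerProductSpace.toDual ℝ E w) (xb + (0:ℝ) • d) := by
      simpa using hφg.hasFDerivAt
    have := hF.comp_hasDerivAt 0 hcurve
    simpa [InnerProductSpace.toDual_apply_apply, Function.comp_def] using this
  -- slope tendsto
  have hslope := hasDerivAt_iff_tendsto_slope.mp hcomp
  have hlt : ⟪w, d⟫ < σ * ⟪w, d⟫ := by nlinarith [hσ.1, hσ.2]
  have hev : ∀ᶠ τ in nhdsWithin (0:ℝ) {(0:ℝ)}ᶜ,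
      slope (fun τ : ℝ => φ (xb + τ • d)) 0 τ < σ * ⟪w, d⟫ :=
    hslope.eventually_lt_const hlt
  rw [eventually_nhdsWithin_iff, Metric.eventually_nhds_iff] at hev
  obtain ⟨η, hη, hev⟩ := hev
  refine ⟨η, hη, fun τ ⟨hτ0, hτη⟩ => ?_⟩
  have hτne : τ ∈ ({(0:ℝ)}ᶜ : Set ℝ) := by simp; linarith
  have hd1 : dist τ 0 < η := by rw [Real.dist_eq, sub_zero, abs_of_pos hτ0]; exact hτη
  have hs := hev hd1 hτne
  rw [slope_def_field] at hs
  constructor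
  · have : (φ (xb + τ • d) - φ xb) / τ < σ * ⟪w, d⟫ := by simpa using hs
    have := (div_lt_iff₀ hτ0).mp this
    nlinarith
  · nlinarith [mul_le_mul_of_nonneg_left hwd (le_of_lt (mul_pos hσ.1 hτ0))]
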